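/- arXiv:0803.0072 — 6 statements merged into one kernel-verified Lean document; each statement's English description precedes it below -/
import Mathlib

section
/- Let a parabola y = a x² (a > 0) be tangent to a circle at two points A and B (so A and B are symmetric about the y-axis). Then a point P lies on the parabola if and only if the distance from P to the line AB equals the length of the tangent segment from P to the circle (i.e., the square of the distance from P to the line AB equals the power of P with respect to the circle). -/
/-- A parabola `y = a x²` (`a > 0`) is tangent to a circle with center `I = (Ix, Iy)` and
radius `r` at the points `A = (-t, a t²)` and `B = (t, a t²)`: both points lie on the circle
and the radius at each point is perpendicular to the tangent line of the parabola there.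
Then a point `P = (x, y)` lies on the parabola iff the square of the distance from `P` to the
line `AB` (which is the horizontal line `y = a t²`) equals the power of `P` with respect to
the circle. -/
theorem parabola_tangent_circle_tangent_length
    (a t r Ix Iy : ℝ) (ha : 0 < a) (ht : 0 < t) (hr : 0 < r)
    (hA_on : (-t - Ix) ^ 2 + (a * t ^ 2 - Iy) ^ 2 = r ^ 2)
    (hB_on : (t - Ix) ^ 2 + (a * t ^ 2 - Iy) ^ 2 = r ^ 2)
    (hA_tangent : (-t - Ix) * 1 + (a * t ^ 2 - Iy) * (-(2 * a * t)) = 0)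
    (hB_tangent : (t - Ix) * 1 + (a * t ^ 2 - Iy) * (2 * a * t) = 0) :
    ∀ x y : ℝ, y = a * x ^ 2 ↔
      (y - a * t ^ 2) ^ 2 = (x - Ix) ^ 2 + (y - Iy) ^ 2 - r ^ 2 := by
  have ha' : a ≠ 0 := ha.ne'
  have hIx : Ix = 0 := by linarith
  have hmul : t * (1 + 2 * a * (a * t ^ 2 - Iy)) = 0 := by
    linear_combination hB_tangent + hIx
  have h1 : 1 + 2 * a * (a * t ^ 2 - Iy) = 0 :=
    (mul_eq_zero.mp hmul).resolve_left ht.ne'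
  have hIy : a * t ^ 2 - Iy = -(1 / (2 * a)) := by
    field_simp
    linarith [h1]
  have hr2 : r ^ 2 = t ^ 2 + (1 / (2 * a)) ^ 2 := by
    rw [← hB_on, hIx, hIy]; ring
  have hIy' : Iy = a * t ^ 2 + 1 / (2 * a) := by linarith
  intro x y
  rw [hIx, hr2, hIy']
  constructor
  · intro h
    subst h
    field_simp
    ring
  · intro h
    field_simp at h
    have h2 : (4 * a) * y = (4 * a) * (a * x ^ 2) := by linear_combination h
    have h4a : (4 : ℝ) * a ≠ 0 := by positivity
    exact mul_left_cancel₀ h4a h2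
end

section
/- Let a parabola y = a x² intersect a circle in four distinct points A, B, C, D. Then the slopes of the line AB and the line CD are negatives of each other; equivalently x_A + x_B = −(x_C + x_D), where x_P denotes the abscissa of P. In particular, the bisector of the angle formed at the intersection of the diagonals of the inscribed quadrilateral is parallel to the axis of the parabola (the y-axis). -/
/-- If the parabola `y = a x²` meets a circle in four distinct points
`A = (x₁, a x₁²)`, `B = (x₂, a x₂²)`, `C = (x₃, a x₃²)`, `D = (x₄, a x₄²)`,
then the slope of line `AB`, namely `a (x₁ + x₂)`, is the negative of the slope of
line `CD`, namely `a (x₃ + x₄)`; equivalently `x₁ + x₂ = -(x₃ + x₄)`.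
Hence the bisector of the angle at the intersection of the diagonals of the inscribed
quadrilateral is parallel to the axis of the parabola. -/
theorem parabola_circle_four_points_slopes
    (a p q r x₁ x₂ x₃ x₄ : ℝ) (ha : a ≠ 0)
    (h12 : x₁ ≠ x₂) (h13 : x₁ ≠ x₃) (h14 : x₁ ≠ x₄)
    (h23 : x₂ ≠ x₃) (h24 : x₂ ≠ x₄) (h34 : x₃ ≠ x₄)
    (hA : (x₁ - p) ^ 2 + (a * x₁ ^ 2 - q) ^ 2 = r ^ 2)
    (hB : (x₂ - p) ^ 2 + (a * x₂ ^ 2 - q) ^ 2 = r ^ 2)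
    (hC : (x₃ - p) ^ 2 + (a * x₃ ^ 2 - q) ^ 2 = r ^ 2)
    (hD : (x₄ - p) ^ 2 + (a * x₄ ^ 2 - q) ^ 2 = r ^ 2) :
    a * (x₁ + x₂) = -(a * (x₃ + x₄)) ∧ x₁ + x₂ = -(x₃ + x₄) := by
  -- divided differences of the quartic a²x⁴ + (1-2aq)x² - 2px + const
  have step : ∀ u v : ℝ, u ≠ v →
      (u - p) ^ 2 + (a * u ^ 2 - q) ^ 2 = r ^ 2 →
      (v - p) ^ 2 + (a * v ^ 2 - q) ^ 2 = r ^ 2 →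
      a^2*(u^3+u^2*v+u*v^2+v^3) + (1-2*a*q)*(u+v) - 2*p = 0 := by
    intro u v huv hu hv
    have key : (u - v) * (a^2*(u^3+u^2*v+u*v^2+v^3) + (1-2*a*q)*(u+v) - 2*p) = 0 := by
      linear_combination hu - hv
    exact (mul_eq_zero.mp key).resolve_left (sub_ne_zero.mpr huv)
  have e12 := step x₁ x₂ h12 hA hB
  have e13 := step x₁ x₃ h13 hA hC
  have e42 := step x₄ x₂ (Ne.symm h24) hD hB
  have e43 := step x₄ x₃ (Ne.symm h34) hD hC
  have g1 : a^2*(x₁^2 + x₁*(x₂+x₃) + x₂^2 + x₂*x₃ + x₃^2) + (1-2*a*q) = 0 := by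
    have key : (x₂ - x₃) * (a^2*(x₁^2 + x₁*(x₂+x₃) + x₂^2 + x₂*x₃ + x₃^2) + (1-2*a*q)) = 0 := by
      linear_combination e12 - e13
    exact (mul_eq_zero.mp key).resolve_left (sub_ne_zero.mpr h23)
  have g4 : a^2*(x₄^2 + x₄*(x₂+x₃) + x₂^2 + x₂*x₃ + x₃^2) + (1-2*a*q) = 0 := by
    have key : (x₂ - x₃) * (a^2*(x₄^2 + x₄*(x₂+x₃) + x₂^2 + x₂*x₃ + x₃^2) + (1-2*a*q)) = 0 := by
      linear_combination e42 - e43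
    exact (mul_eq_zero.mp key).resolve_left (sub_ne_zero.mpr h23)
  have hsum : x₁ + x₂ + x₃ + x₄ = 0 := by
    have key : (x₁ - x₄) * (a^2 * (x₁ + x₂ + x₃ + x₄)) = 0 := by
      linear_combination g1 - g4
    have h := (mul_eq_zero.mp key).resolve_left (sub_ne_zero.mpr h14)
    have ha2 : a^2 ≠ 0 := pow_ne_zero 2 ha
    have := (mul_eq_zero.mp h).resolve_left ha2
    linarith
  constructor
  · linear_combination a * hsum
  · linarith
end

section
/- Two parabolas with perpendicular axes intersect in four points lying on one circle, and the intersection point of the axes of the two parabolas is the barycenter (centroid) of the four intersection points. -/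
lemma quartic_sum_zero (A B C : ℝ) (hA : A ≠ 0) (x₁ x₂ x₃ x₄ : ℝ)
    (h1 : A*x₁^4 + B*x₁^2 + C = x₁) (h2 : A*x₂^4 + B*x₂^2 + C = x₂)
    (h3 : A*x₃^4 + B*x₃^2 + C = x₃) (h4 : A*x₄^4 + B*x₄^2 + C = x₄)
    (h12 : x₁ ≠ x₂) (h13 : x₁ ≠ x₃) (h14 : x₁ ≠ x₄)
    (h23 : x₂ ≠ x₃) (h24 : x₂ ≠ x₄) (h34 : x₃ ≠ x₄) :
    x₁ + x₂ + x₃ + x₄ = 0 := by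
  have d12 : x₁ - x₂ ≠ 0 := sub_ne_zero.mpr h12
  have d13 : x₁ - x₃ ≠ 0 := sub_ne_zero.mpr h13
  have d14 : x₁ - x₄ ≠ 0 := sub_ne_zero.mpr h14
  have d23 : x₂ - x₃ ≠ 0 := sub_ne_zero.mpr h23
  have d24 : x₂ - x₄ ≠ 0 := sub_ne_zero.mpr h24
  have d34 : x₃ - x₄ ≠ 0 := sub_ne_zero.mpr h34
  have g12 : A*(x₁^3+x₁^2*x₂+x₁*x₂^2+x₂^3) + B*(x₁+x₂) - 1 = 0 := by
    have h : (x₁ - x₂) * (A*(x₁^3+x₁^2*x₂+x₁*x₂^2+x₂^3) + B*(x₁+x₂) - 1) = 0 := by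
      linear_combination h1 - h2
    exact (mul_eq_zero.mp h).resolve_left d12
  have g13 : A*(x₁^3+x₁^2*x₃+x₁*x₃^2+x₃^3) + B*(x₁+x₃) - 1 = 0 := by
    have h : (x₁ - x₃) * (A*(x₁^3+x₁^2*x₃+x₁*x₃^2+x₃^3) + B*(x₁+x₃) - 1) = 0 := by
      linear_combination h1 - h3
    exact (mul_eq_zero.mp h).resolve_left d13
  have g14 : A*(x₁^3+x₁^2*x₄+x₁*x₄^2+x₄^3) + B*(x₁+x₄) - 1 = 0 := by
    have h : (x₁ - x₄) * (A*(x₁^3+x₁^2*x₄+x₁*x₄^2+x₄^3) + B*(x₁+x₄) - 1) = 0 := by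
      linear_combination h1 - h4
    exact (mul_eq_zero.mp h).resolve_left d14
  have k123 : A*(x₁^2+x₁*x₂+x₁*x₃+x₂^2+x₂*x₃+x₃^2) + B = 0 := by
    have h : (x₂ - x₃) * (A*(x₁^2+x₁*x₂+x₁*x₃+x₂^2+x₂*x₃+x₃^2) + B) = 0 := by
      linear_combination g12 - g13
    exact (mul_eq_zero.mp h).resolve_left d23
  have k124 : A*(x₁^2+x₁*x₂+x₁*x₄+x₂^2+x₂*x₄+x₄^2) + B = 0 := by
    have h : (x₂ - x₄) * (A*(x₁^2+x₁*x₂+x₁*x₄+x₂^2+x₂*x₄+x₄^2) + B) = 0 := by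
      linear_combination g12 - g14
    exact (mul_eq_zero.mp h).resolve_left d24
  have fin : A * ((x₃ - x₄) * (x₁+x₂+x₃+x₄)) = 0 := by
    linear_combination k123 - k124
  have := (mul_eq_zero.mp fin).resolve_left hA
  exact (mul_eq_zero.mp this).resolve_left d34

/-- Two parabolas `y = a x² + c` (axis: the vertical line `x = 0`) and `x = b y² + d`
(axis: the horizontal line `y = 0`) meet in four distinct points `Pᵢ = (xᵢ, yᵢ)`.
Then the four points lie on a common circle, and their barycenter is `(0, 0)`, the
intersection point of the two axes. -/
theorem parabolic_intersections_concyclic_and_centroid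
    (a b c d : ℝ) (ha : a ≠ 0) (hb : b ≠ 0)
    (x₁ y₁ x₂ y₂ x₃ y₃ x₄ y₄ : ℝ)
    (hne12 : (x₁, y₁) ≠ (x₂, y₂)) (hne13 : (x₁, y₁) ≠ (x₃, y₃))
    (hne14 : (x₁, y₁) ≠ (x₄, y₄)) (hne23 : (x₂, y₂) ≠ (x₃, y₃))
    (hne24 : (x₂, y₂) ≠ (x₄, y₄)) (hne34 : (x₃, y₃) ≠ (x₄, y₄))
    (hP1 : y₁ = a * x₁ ^ 2 + c ∧ x₁ = b * y₁ ^ 2 + d)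
    (hP2 : y₂ = a * x₂ ^ 2 + c ∧ x₂ = b * y₂ ^ 2 + d)
    (hP3 : y₃ = a * x₃ ^ 2 + c ∧ x₃ = b * y₃ ^ 2 + d)
    (hP4 : y₄ = a * x₄ ^ 2 + c ∧ x₄ = b * y₄ ^ 2 + d) :
    (∃ p q r : ℝ,
      (x₁ - p) ^ 2 + (y₁ - q) ^ 2 = r ^ 2 ∧
      (x₂ - p) ^ 2 + (y₂ - q) ^ 2 = r ^ 2 ∧
      (x₃ - p) ^ 2 + (y₃ - q) ^ 2 = r ^ 2 ∧
      (x₄ - p) ^ 2 + (y₄ - q) ^ 2 = r ^ 2) ∧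
    (x₁ + x₂ + x₃ + x₄) / 4 = 0 ∧ (y₁ + y₂ + y₃ + y₄) / 4 = 0 := by
  obtain ⟨e1, f1⟩ := hP1
  obtain ⟨e2, f2⟩ := hP2
  obtain ⟨e3, f3⟩ := hP3
  obtain ⟨e4, f4⟩ := hP4
  -- x-coordinates are pairwise distinct
  have hx : ∀ (x y x' y' : ℝ), y = a*x^2+c → y' = a*x'^2+c → (x,y) ≠ (x',y') → x ≠ x' := by
    intro x y x' y' hy hy' hne hxx
    exact hne (by subst hxx; simp [hy, hy'])
  have hy : ∀ (x y x' y' : ℝ), x = b*y^2+d → x' = b*y'^2+d → (x,y) ≠ (x',y') → y ≠ y' := by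
    intro x y x' y' hx hx' hne hyy
    exact hne (by subst hyy; simp [hx, hx'])
  have hx12 := hx _ _ _ _ e1 e2 hne12
  have hx13 := hx _ _ _ _ e1 e3 hne13
  have hx14 := hx _ _ _ _ e1 e4 hne14
  have hx23 := hx _ _ _ _ e2 e3 hne23
  have hx24 := hx _ _ _ _ e2 e4 hne24
  have hx34 := hx _ _ _ _ e3 e4 hne34
  have hy12 := hy _ _ _ _ f1 f2 hne12
  have hy13 := hy _ _ _ _ f1 f3 hne13
  have hy14 := hy _ _ _ _ f1 f4 hne14
  have hy23 := hy _ _ _ _ f2 f3 hne23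
  have hy24 := hy _ _ _ _ f2 f4 hne24
  have hy34 := hy _ _ _ _ f3 f4 hne34
  have hA : a^2*b ≠ 0 := by positivity
  have hB : a*b^2 ≠ 0 := by positivity
  have qx : ∀ (x y : ℝ), y = a*x^2+c → x = b*y^2+d →
      (a^2*b)*x^4 + (2*a*b*c)*x^2 + (b*c^2+d) = x := by
    intro x y hy hx; rw [hy] at hx; linear_combination -hx
  have qy : ∀ (x y : ℝ), y = a*x^2+c → x = b*y^2+d →
      (a*b^2)*y^4 + (2*a*b*d)*y^2 + (a*d^2+c) = y := by
    intro x y hy hx; rw [hx] at hy; linear_combination -hy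
  have sx := quartic_sum_zero _ _ _ hA x₁ x₂ x₃ x₄ (qx _ _ e1 f1) (qx _ _ e2 f2)
    (qx _ _ e3 f3) (qx _ _ e4 f4) hx12 hx13 hx14 hx23 hx24 hx34
  have sy := quartic_sum_zero _ _ _ hB y₁ y₂ y₃ y₄ (qy _ _ e1 f1) (qy _ _ e2 f2)
    (qy _ _ e3 f3) (qy _ _ e4 f4) hy12 hy13 hy14 hy23 hy24 hy34
  refine ⟨⟨1/(2*b), 1/(2*a), Real.sqrt ((x₁ - 1/(2*b))^2 + (y₁ - 1/(2*a))^2), ?_, ?_, ?_, ?_⟩,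
    by linarith, by linarith⟩
  · rw [Real.sq_sqrt (by positivity)]
  · rw [Real.sq_sqrt (by positivity)]
    field_simp
    linear_combination (-4*a*b^2) * (e2 - e1) + (-4*a^2*b) * (f2 - f1)
  · rw [Real.sq_sqrt (by positivity)]
    field_simp
    linear_combination (-4*a*b^2) * (e3 - e1) + (-4*a^2*b) * (f3 - f1)
  · rw [Real.sq_sqrt (by positivity)]
    field_simp
    linear_combination (-4*a*b^2) * (e4 - e1) + (-4*a^2*b) * (f4 - f1)
end

section
/- Let P = (x₀, a x₀²) be a point on the parabola y = a x², and let H = (x₀, a t²) be its projection onto the horizontal chord AB where A = (−t, a t²), B = (t, a t²), with |x₀| < t or |x₀| > t, x₀ ≠ ±t. Let K and L be the orthogonal projections of H onto lines AP and BP respectively. Then the four points A, B, K, L lie on one circle. -/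
/-- Let `P = (x₀, a x₀²)` be on the parabola `y = a x²` (`a > 0`, `t > 0`, `x₀ ≠ ±t`),
let `A = (-t, a t²)`, `B = (t, a t²)`, and let `H = (x₀, a t²)` be the foot of the
perpendicular from `P` to line `AB`. Let `K` and `L` be the orthogonal projections of `H`
onto lines `AP` and `BP` respectively. Then `A`, `B`, `K`, `L` lie on one circle. -/
theorem projections_concyclic
    (a t x₀ : ℝ) (ha : 0 < a) (ht : 0 < t) (hx₁ : x₀ ≠ t) (hx₂ : x₀ ≠ -t)
    (A B P H K L : ℝ × ℝ)
    (hA : A = (-t, a * t ^ 2)) (hB : B = (t, a * t ^ 2))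
    (hP : P = (x₀, a * x₀ ^ 2)) (hH : H = (x₀, a * t ^ 2))
    (hK_mem : ∃ s : ℝ, K = (A.1 + s * (P.1 - A.1), A.2 + s * (P.2 - A.2)))
    (hK_perp : (H.1 - K.1) * (P.1 - A.1) + (H.2 - K.2) * (P.2 - A.2) = 0)
    (hL_mem : ∃ s : ℝ, L = (B.1 + s * (P.1 - B.1), B.2 + s * (P.2 - B.2)))
    (hL_perp : (H.1 - L.1) * (P.1 - B.1) + (H.2 - L.2) * (P.2 - B.2) = 0) :
    ∃ p q r : ℝ,
      (A.1 - p) ^ 2 + (A.2 - q) ^ 2 = r ^ 2 ∧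
      (B.1 - p) ^ 2 + (B.2 - q) ^ 2 = r ^ 2 ∧
      (K.1 - p) ^ 2 + (K.2 - q) ^ 2 = r ^ 2 ∧
      (L.1 - p) ^ 2 + (L.2 - q) ^ 2 = r ^ 2 := by

  obtain ⟨s, hK⟩ := hK_mem
  obtain ⟨u, hL⟩ := hL_mem
  subst hA hB hP hH hK hL
  simp only [Prod.fst, Prod.snd] at *
  have ha' : a ≠ 0 := ne_of_gt ha
  have hr : (0:ℝ) ≤ t ^ 2 + 1 / (4 * a ^ 2) := by positivity
  refine ⟨0, a * t ^ 2 + 1 / (2 * a), Real.sqrt (t ^ 2 + 1 / (4 * a ^ 2)), ?_, ?_, ?_, ?_⟩ <;>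
    rw [Real.sq_sqrt hr]
  · field_simp; ring
  · field_simp; ring
  · field_simp; linear_combination (-16*a^2*s) * hK_perp
  · field_simp; linear_combination (-16*a^2*u) * hL_perp
end

section
/- Let ABCD be a quadrilateral inscribed in a circle whose diagonals AC and BD meet at L, and let the line through L bisect the angle ALD, meeting lines BC and AD at M and N. Then BM/MC = AN/ND. -/
open EuclideanGeometry

lemma collinear_sub' {V : Type*} [AddCommGroup V] [Module ℝ V]
    {s : Set V} (h : Collinear ℝ s) {p q x : V} (hp : p ∈ s) (hq : q ∈ s) (hx : x ∈ s)
    (hpq : p ≠ q) : ∃ r : ℝ, x - p = r • (q - p) := by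
  obtain ⟨p₀, v, hv⟩ := (collinear_iff_exists_forall_eq_smul_vadd s).mp h
  obtain ⟨rp, hrp⟩ := hv p hp
  obtain ⟨rq, hrq⟩ := hv q hq
  obtain ⟨rx, hrx⟩ := hv x hx
  have hqp : q - p = (rq - rp) • v := by rw [hrq, hrp, vadd_eq_add, vadd_eq_add]; module
  have hne : rq - rp ≠ 0 := by
    intro h0
    apply hpq
    have : q - p = 0 := by rw [hqp, h0, zero_smul]
    exact (sub_eq_zero.mp this).symm
  refine ⟨(rx - rp)/(rq - rp), ?_⟩
  have hxp : x - p = (rx - rp) • v := by rw [hrx, hrp, vadd_eq_add, vadd_eq_add]; module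
  rw [hxp, hqp, smul_smul]
  congr 1
  field_simp

/-- Let `ABCD` be a quadrilateral inscribed in a circle whose diagonals `AC` and `BD` meet
at an interior point `L`. The internal bisector of angle `ALD` meets segment `AD` at `N`
and line `BC` at `M` (so `L`, `N`, `M` are collinear and `∠ALN = ∠NLD`).
Then `BM / MC = AN / ND`, i.e. `BM ⬝ ND = AN ⬝ MC`. -/
theorem cyclic_quadrilateral_bisector_ratio
    (A B C D L M N : EuclideanSpace ℝ (Fin 2))
    (hAB : A ≠ B) (hAC : A ≠ C) (hAD : A ≠ D) (hBC : B ≠ C) (hBD : B ≠ D) (hCD : C ≠ D)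
    (hconcyclic : ∃ O : EuclideanSpace ℝ (Fin 2), ∃ r : ℝ,
      dist A O = r ∧ dist B O = r ∧ dist C O = r ∧ dist D O = r)
    (hL_AC : L ∈ segment ℝ A C) (hL_BD : L ∈ segment ℝ B D)
    (hLA : L ≠ A) (hLB : L ≠ B) (hLC : L ≠ C) (hLD : L ≠ D)
    (hN_AD : N ∈ segment ℝ A D) (hNL : N ≠ L)
    (hbisect : ∠ A L N = ∠ N L D)
    (hM_BC : M ∈ affineSpan ℝ ({B, C} : Set (EuclideanSpace ℝ (Fin 2))))
    (hM_line : Collinear ℝ ({L, N, M} : Set (EuclideanSpace ℝ (Fin 2)))) :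
    dist B M * dist N D = dist A N * dist M C := by
  obtain ⟨O, r, hAO, hBO, hCO, hDO⟩ := hconcyclic
  -- cospherical
  have hcos : Cospherical ({A, C, B, D} : Set (EuclideanSpace ℝ (Fin 2))) := by
    rw [cospherical_def]
    refine ⟨O, r, ?_⟩
    intro p hp
    simp only [Set.mem_insert_iff, Set.mem_singleton_iff] at hp
    rcases hp with rfl | rfl | rfl | rfl <;> assumption
  have hABD : ¬ Collinear ℝ ({A, B, D} : Set (EuclideanSpace ℝ (Fin 2))) :=
    affineIndependent_iff_not_collinear_set.mp
      (hcos.affineIndependent_of_mem_of_ne (by simp) (by simp) (by simp) hAB hAD hBD)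
  -- power of the point
  have hpow : dist A L * dist C L = dist B L * dist D L := by
    refine mul_dist_eq_mul_dist_of_cospherical_of_angle_eq_pi hcos ?_ ?_
    · exact angle_eq_pi_iff_sbtw.2 ⟨mem_segment_iff_wbtw.1 hL_AC, hLA, hLC⟩
    · exact angle_eq_pi_iff_sbtw.2 ⟨mem_segment_iff_wbtw.1 hL_BD, hLB, hLD⟩
  -- segment parameters
  rw [segment_eq_image'] at hL_AC hL_BD hN_AD
  obtain ⟨σ, hσI, hσ⟩ := hL_AC
  obtain ⟨τ, hτI, hτ⟩ := hL_BD
  obtain ⟨t, htI, htN⟩ := hN_AD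
  have hσ0 : σ ≠ 0 := by
    rintro rfl
    have h : A = L := by simpa using hσ
    exact hLA h.symm
  have hσ1 : σ ≠ 1 := by
    rintro rfl
    have h : C = L := by
      have := hσ
      simp only [one_smul] at this
      rw [← this]; abel
    exact hLC h.symm
  have hτ0 : τ ≠ 0 := by
    rintro rfl
    have h : B = L := by simpa using hτ
    exact hLB h.symm
  have hτ1 : τ ≠ 1 := by
    rintro rfl
    have h : D = L := by
      have := hτ
      simp only [one_smul] at this
      rw [← this]; abel
    exact hLD h.symm
  have hσpos : 0 < σ := lt_of_le_of_ne hσI.1 (Ne.symm hσ0)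
  have hσlt : σ < 1 := lt_of_le_of_ne hσI.2 hσ1
  have hτpos : 0 < τ := lt_of_le_of_ne hτI.1 (Ne.symm hτ0)
  have hτlt : τ < 1 := lt_of_le_of_ne hτI.2 hτ1
  obtain ⟨γ, hγdef⟩ : ∃ γ : ℝ, γ = (1 - σ)/σ := ⟨_, rfl⟩
  obtain ⟨β, hβdef⟩ : ∃ β : ℝ, β = τ/(1 - τ) := ⟨_, rfl⟩
  have hγpos : 0 < γ := hγdef ▸ div_pos (by linarith) hσpos
  have hβpos : 0 < β := hβdef ▸ div_pos hτpos (by linarith)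
  -- vector relations
  have hu : A - L = (-σ) • (C - A) := by rw [← hσ]; module
  have hw2 : C - L = (1 - σ) • (C - A) := by rw [← hσ]; module
  have hC : C - L = (-γ) • (A - L) := by
    rw [hu, hw2, smul_smul]
    congr 1
    rw [hγdef]
    field_simp
  have hu2 : B - L = (-τ) • (D - B) := by rw [← hτ]; module
  have hw3 : D - L = (1 - τ) • (D - B) := by rw [← hτ]; module
  have hB2 : B - L = (-β) • (D - L) := by
    rw [hu2, hw3, smul_smul]
    congr 1
    rw [hβdef]
    have h1τ : (1:ℝ) - τ ≠ 0 := by intro h; apply hτ1; linarith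
    field_simp
  -- linear independence of A - L, D - L
  have hDL : D - L ≠ 0 := sub_ne_zero.2 (Ne.symm hLD)
  have hAL : A - L ≠ 0 := sub_ne_zero.2 (Ne.symm hLA)
  have hindep : ∀ x y : ℝ, x • (A - L) + y • (D - L) = 0 → x = 0 ∧ y = 0 := by
    intro x y hxy
    by_cases hx : x = 0
    · subst hx
      rw [zero_smul, zero_add, smul_eq_zero] at hxy
      exact ⟨rfl, hxy.resolve_right hDL⟩
    · exfalso
      apply hABD
      rw [collinear_iff_exists_forall_eq_smul_vadd]
      refine ⟨L, D - L, ?_⟩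
      have h2 : x • (A - L) = (-y) • (D - L) := by
        rw [neg_smul, ← add_eq_zero_iff_eq_neg] at *
        exact hxy
      have h3 : A - L = (x⁻¹ * -y) • (D - L) := by
        rw [mul_smul, ← h2, smul_smul, inv_mul_cancel₀ hx, one_smul]
      intro p hp
      simp only [Set.mem_insert_iff, Set.mem_singleton_iff] at hp
      rcases hp with rfl | rfl | rfl
      · exact ⟨x⁻¹ * -y, by rw [vadd_eq_add]; exact sub_eq_iff_eq_add.mp h3⟩
      · exact ⟨-β, by rw [vadd_eq_add]; exact sub_eq_iff_eq_add.mp hB2⟩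
      · exact ⟨1, by rw [vadd_eq_add, one_smul]; exact sub_eq_iff_eq_add.mp rfl⟩
  -- norms
  have ha : 0 < ‖A - L‖ := norm_pos_iff.2 hAL
  have hd : 0 < ‖D - L‖ := norm_pos_iff.2 hDL
  have hb : ‖B - L‖ = β * ‖D - L‖ := by
    rw [hB2, norm_smul, Real.norm_eq_abs, abs_neg, abs_of_pos hβpos]
  have hc : ‖C - L‖ = γ * ‖A - L‖ := by
    rw [hC, norm_smul, Real.norm_eq_abs, abs_neg, abs_of_pos hγpos]
  have hpow' : γ * ‖A - L‖^2 = β * ‖D - L‖^2 := by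
    rw [dist_eq_norm, dist_eq_norm, dist_eq_norm, dist_eq_norm, hb, hc] at hpow
    linear_combination hpow
  -- the point N
  have hn : N - L = (1 - t) • (A - L) + t • (D - L) := by rw [← htN]; module
  have hNL' : N - L ≠ 0 := sub_ne_zero.2 hNL
  have hnn : 0 < ‖N - L‖ := norm_pos_iff.2 hNL'
  -- the bisector equation, via cosines
  have hbisect' : InnerProductGeometry.angle (A - L) (N - L) =
      InnerProductGeometry.angle (N - L) (D - L) := by
    simpa [EuclideanGeometry.angle, vsub_eq_sub] using hbisect
  -- exclude t = 0 and t = 1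
  have hALD : InnerProductGeometry.angle (A - L) (D - L) ≠ 0 := by
    intro h0
    obtain ⟨-, r', hr', h⟩ := InnerProductGeometry.angle_eq_zero_iff.mp h0
    have := hindep r' (-1) (by rw [h]; module)
    norm_num at this
  have ht0 : t ≠ 0 := by
    rintro rfl
    have hNA : N = A := by simpa using htN.symm
    subst hNA
    rw [InnerProductGeometry.angle_self hAL] at hbisect'
    exact hALD hbisect'.symm
  have ht1 : t ≠ 1 := by
    rintro rfl
    have hND : N = D := by
      have := htN.symm
      simp only [one_smul] at this
      rw [this]; abel
    subst hND
    rw [InnerProductGeometry.angle_self hDL] at hbisect'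
    exact hALD hbisect'
  have ht0' : 0 < t := lt_of_le_of_ne htI.1 (Ne.symm ht0)
  have ht1' : t < 1 := lt_of_le_of_ne htI.2 ht1
  -- strict Cauchy-Schwarz
  have hcosEq := congrArg Real.cos hbisect'
  obtain ⟨p, hpdef⟩ : ∃ p : ℝ, p = (inner ℝ (A - L) (D - L) : ℝ) := ⟨_, rfl⟩
  have hCS : p < ‖A - L‖ * ‖D - L‖ := by
    rw [hpdef]
    rw [inner_lt_norm_mul_iff_real]
    intro heq
    have := hindep (‖D - L‖) (-(‖A - L‖)) (by rw [heq]; module)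
    exact hd.ne' this.1
  -- cos equality gives the cross-multiplied equation
  rw [InnerProductGeometry.cos_angle, InnerProductGeometry.cos_angle] at hcosEq
  have hinnerAN : (inner ℝ (A - L) (N - L) : ℝ) = (1 - t) * ‖A - L‖^2 + t * p := by
    rw [hn, inner_add_right, real_inner_smul_right, real_inner_smul_right,
      real_inner_self_eq_norm_sq, hpdef]
  have hinnerND : (inner ℝ (N - L) (D - L) : ℝ) = (1 - t) * p + t * ‖D - L‖^2 := by
    rw [hn, inner_add_left, real_inner_smul_left, real_inner_smul_left,
      real_inner_self_eq_norm_sq, hpdef]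
  rw [hinnerAN, hinnerND, div_eq_div_iff (by positivity) (by positivity)] at hcosEq
  have hkey : (1 - t) * ‖A - L‖ = t * ‖D - L‖ := by
    have h2 : ((1 - t) * ‖A - L‖^2 + t * p) * ‖D - L‖
        = ((1 - t) * p + t * ‖D - L‖^2) * ‖A - L‖ :=
      mul_right_cancel₀ hnn.ne' (by linear_combination hcosEq)
    have h4 : ((1 - t) * ‖A - L‖ - t * ‖D - L‖) * (‖A - L‖ * ‖D - L‖ - p) = 0 := by
      linear_combination h2
    rcases mul_eq_zero.mp h4 with h | h
    · linarith
    · exfalso; linarith [hCS]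
  -- the point M on line BC and on line LN
  have hMBC_col : Collinear ℝ ({M, B, C} : Set (EuclideanSpace ℝ (Fin 2))) :=
    collinear_insert_of_mem_affineSpan_pair hM_BC
  obtain ⟨s, hs⟩ := collinear_sub' (p := B) (q := C) (x := M) hMBC_col (by simp) (by simp) (by simp) hBC
  obtain ⟨k, hk⟩ := collinear_sub' (p := L) (q := N) (x := M) hM_line (by simp) (by simp) (by simp) (Ne.symm hNL)
  have hM_uw : M - L = (-(s*γ)) • (A - L) + (-((1-s)*β)) • (D - L) := by
    calc M - L = s • (C - B) + (B - L) := by rw [← hs]; abel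
      _ = (1 - s) • (B - L) + s • (C - L) := by module
      _ = (1 - s) • ((-β) • (D - L)) + s • ((-γ) • (A - L)) := by rw [← hB2, ← hC]
      _ = (-(s*γ)) • (A - L) + (-((1-s)*β)) • (D - L) := by module
  have heq : (k*(1-t) + s*γ) • (A - L) + (k*t + (1-s)*β) • (D - L) = 0 := by
    have h6 : k • ((1-t) • (A - L) + t • (D - L))
        = (-(s*γ)) • (A - L) + (-((1-s)*β)) • (D - L) := by
      rw [← hn, ← hk]; exact hM_uw
    have h7 : (k*(1-t) + s*γ) • (A - L) + (k*t + (1-s)*β) • (D - L)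
        = k • ((1-t) • (A - L) + t • (D - L))
          - ((-(s*γ)) • (A - L) + (-((1-s)*β)) • (D - L)) := by module
    rw [h7, h6, sub_self]
  obtain ⟨e1, e2⟩ := hindep _ _ heq
  have hk0 : k ≠ 0 := by
    rintro rfl
    have hgb : γ*β = 0 := by linear_combination β*e1 + γ*e2
    exact absurd hgb (mul_pos hγpos hβpos).ne'
  have hkneg : k < 0 := by
    have hsum : γ*β = -k*((1-t)*β + t*γ) := by linear_combination β*e1 + γ*e2
    have hpos2 : 0 < (1-t)*β + t*γ :=
      add_pos (mul_pos (by linarith) hβpos) (mul_pos ht0' hγpos)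
    by_contra hcon
    push_neg at hcon
    have h3 : -k * ((1-t)*β + t*γ) ≤ 0 :=
      mul_nonpos_iff.2 (Or.inr ⟨by linarith, hpos2.le⟩)
    rw [← hsum] at h3
    exact absurd h3 (not_le.2 (mul_pos hγpos hβpos))
  have hsg : s*γ = -k*(1-t) := by linear_combination e1
  have h1s : (1-s)*β = -k*t := by linear_combination e2
  have hs0 : 0 < s := by
    have h := mul_pos (neg_pos.2 hkneg) (show (0:ℝ) < 1-t by linarith)
    rw [← hsg] at h
    rcases mul_pos_iff.mp h with ⟨h1, -⟩ | ⟨-, h2⟩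
    · exact h1
    · linarith
  have hs1 : s < 1 := by
    have h := mul_pos (neg_pos.2 hkneg) ht0'
    rw [← h1s] at h
    rcases mul_pos_iff.mp h with ⟨h1, -⟩ | ⟨-, h2⟩
    · linarith
    · linarith
  have h8 : β*(1-t)^2 = γ*t^2 := by
    have h9 : (β*(1-t)^2 - γ*t^2) * ‖A - L‖^2 = 0 := by
      linear_combination (β*((1-t)*‖A - L‖ + t*‖D - L‖)) * hkey - t^2 * hpow'
    rcases mul_eq_zero.mp h9 with h | h
    · linarith
    · exact absurd h (by positivity)
  have hratio : s*(1-t) = t*(1-s) := by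
    have h10 : (s*(1-t) - t*(1-s)) * (γ*β) = 0 := by
      linear_combination ((1-t)*β)*e1 - (t*γ)*e2 + (-k)*h8
    rcases mul_eq_zero.mp h10 with h | h
    · linarith
    · exact absurd h (mul_pos hγpos hβpos).ne'
  -- final distance computations
  have hBMd : dist B M = s * ‖C - B‖ := by
    rw [dist_eq_norm, norm_sub_rev, hs, norm_smul, Real.norm_eq_abs, abs_of_pos hs0]
  have hMC2 : M - C = (s - 1) • (C - B) := by
    have h11 : M - C = (M - B) - (C - B) := by abel
    rw [h11, hs]; module
  have hMCd : dist M C = (1 - s) * ‖C - B‖ := by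
    rw [dist_eq_norm, hMC2, norm_smul, Real.norm_eq_abs,
      abs_of_neg (show s - 1 < 0 by linarith)]
    ring
  have hNA2 : N - A = t • (D - A) := by rw [← htN]; module
  have hANd : dist A N = t * ‖D - A‖ := by
    rw [dist_eq_norm, norm_sub_rev, hNA2, norm_smul, Real.norm_eq_abs, abs_of_pos ht0']
  have hND2 : N - D = (t - 1) • (D - A) := by rw [← htN]; module
  have hNDd : dist N D = (1 - t) * ‖D - A‖ := by
    rw [dist_eq_norm, hND2, norm_smul, Real.norm_eq_abs,
      abs_of_neg (show t - 1 < 0 by linarith)]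
    ring
  rw [hBMd, hNDd, hANd, hMCd]
  linear_combination (‖C - B‖ * ‖D - A‖) * hratio
end

section
/- Let ALB be a right triangle with right angle at L and H the foot of the altitude from L onto AB. Suppose a line ℓ passes through L, and let α be the angle between ℓ and line LA. If a circle passes through H and meets line AB again at X (with order A, H, X, B or A, X, H, B), and t_A, t_B denote tangent lengths from A, B to the circle, then t_A²/AL² + t_B²/BL² = 1. Consequently, if the distance a from A to ℓ satisfies a = t_A, then the distance b from B to ℓ satisfies b = t_B. -/
open scoped RealInnerProductSpace

lemma infDist_line_sq {E : Type*} [NormedAddCommGroup E] [InnerProductSpace ℝ E]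
    (P L Q : E) (hQ : Q ≠ L) :
    Metric.infDist P (affineSpan ℝ ({L, Q} : Set E) : Set E) ^ 2
      = ‖P - L‖ ^ 2 - ⟪P - L, Q - L⟫ ^ 2 / ‖Q - L‖ ^ 2 := by
  set v : E := Q - L with hv_def
  have hv : v ≠ 0 := sub_ne_zero.mpr hQ
  have hnv0 : ‖v‖ ≠ 0 := norm_ne_zero_iff.mpr hv
  have hnv : (0:ℝ) < ‖v‖ ^ 2 := by positivity
  set c : ℝ := ⟪P - L, v⟫ / ‖v‖ ^ 2 with hc_def
  set F : E := c • v + L with hF_def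
  have hFmem : F ∈ (affineSpan ℝ ({L, Q} : Set E) : Set E) := by
    have := smul_vsub_vadd_mem_affineSpan_pair c L Q
    simpa [hF_def, vsub_eq_sub, vadd_eq_add] using this
  -- distance to a general point of the line
  have key : ∀ t : ℝ, dist P (t • v + L) ^ 2
      = ‖P - L‖ ^ 2 - 2 * t * ⟪P - L, v⟫ + t ^ 2 * ‖v‖ ^ 2 := by
    intro t
    rw [dist_eq_norm]
    have : P - (t • v + L) = (P - L) - t • v := by abel
    rw [this, norm_sub_sq_real, real_inner_smul_right, norm_smul]
    simp [mul_pow]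
    ring
  have hdF : dist P F ^ 2 = ‖P - L‖ ^ 2 - ⟪P - L, v⟫ ^ 2 / ‖v‖ ^ 2 := by
    rw [hF_def, key c, hc_def]
    field_simp
    ring
  have heq : Metric.infDist P (affineSpan ℝ ({L, Q} : Set E) : Set E) = dist P F := by
    refine le_antisymm (Metric.infDist_le_dist_of_mem hFmem) ?_
    rw [Metric.infDist_eq_iInf]
    have hne : Nonempty (affineSpan ℝ ({L, Q} : Set E) : Set E) := ⟨⟨F, hFmem⟩⟩
    refine le_ciInf fun y => ?_
    obtain ⟨t, ht⟩ : ∃ t : ℝ, (y : E) = t • v + L := by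
      have hy : (y : E) -ᵥ L ∈ (affineSpan ℝ ({L, Q} : Set E)).direction :=
        AffineSubspace.vsub_mem_direction y.2 (left_mem_affineSpan_pair ℝ L Q)
      rw [direction_affineSpan, vectorSpan_pair, Submodule.mem_span_singleton] at hy
      obtain ⟨t, ht⟩ := hy
      simp only [vsub_eq_sub] at ht
      refine ⟨-t, sub_eq_iff_eq_add.mp ?_⟩
      rw [neg_smul, ← ht, hv_def]
      module
    have h1 : dist P F ^ 2 ≤ dist P (y : E) ^ 2 := by
      rw [ht, key t, hdF]
      have hsq : 0 ≤ (t - c) ^ 2 * ‖v‖ ^ 2 := by positivity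
      have hip : ⟪P - L, v⟫ = c * ‖v‖ ^ 2 := by rw [hc_def]; field_simp
      have h2 : ⟪P - L, v⟫ ^ 2 / ‖v‖ ^ 2 = c ^ 2 * ‖v‖ ^ 2 := by
        rw [hip]; field_simp
      rw [h2, hip]
      nlinarith [hsq]
    nlinarith [dist_nonneg (x := P) (y := F), dist_nonneg (x := P) (y := (y : E))]
  rw [heq, hdF]


lemma inner_sq_div_add (v e1 e2 : EuclideanSpace ℝ (Fin 2)) (h1 : e1 ≠ 0) (h2 : e2 ≠ 0)
    (hperp : ⟪e1, e2⟫ = 0) :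
    ⟪v, e1⟫ ^ 2 / ‖e1‖ ^ 2 + ⟪v, e2⟫ ^ 2 / ‖e2‖ ^ 2 = ‖v‖ ^ 2 := by
  have hn1 : ‖e1‖ ≠ 0 := norm_ne_zero_iff.mpr h1
  have hn2 : ‖e2‖ ≠ 0 := norm_ne_zero_iff.mpr h2
  have hperp' : ⟪e2, e1⟫ = 0 := by rw [real_inner_comm]; exact hperp
  have li : LinearIndependent ℝ ![e1, e2] := by
    rw [LinearIndependent.pair_iff]
    intro s t hst
    have hs : ⟪e1, s • e1 + t • e2⟫ = 0 := by rw [hst]; simp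
    have ht : ⟪e2, s • e1 + t • e2⟫ = 0 := by rw [hst]; simp
    simp only [inner_add_right, real_inner_smul_right, hperp, hperp',
      real_inner_self_eq_norm_sq, mul_zero, add_zero, zero_add] at hs ht
    constructor
    · exact (mul_eq_zero.mp hs).resolve_right (by positivity)
    · exact (mul_eq_zero.mp ht).resolve_right (by positivity)
  have hspan : Submodule.span ℝ (Set.range ![e1, e2]) = ⊤ := by
    apply Submodule.eq_top_of_finrank_eq
    rw [finrank_span_eq_card li]
    simp [finrank_euclideanSpace_fin]
  have hv : v ∈ Submodule.span ℝ ({e1, e2} : Set (EuclideanSpace ℝ (Fin 2))) := by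
    have hr : Set.range ![e1, e2] = {e1, e2} := by
      simp [Matrix.range_cons, Matrix.range_empty, Set.pair_comm e2 e1]
    rw [← hr, hspan]; trivial
  obtain ⟨a, b, hab⟩ := Submodule.mem_span_pair.mp hv
  subst hab
  have hnorm : ‖a • e1 + b • e2‖ ^ 2 = a ^ 2 * ‖e1‖ ^ 2 + b ^ 2 * ‖e2‖ ^ 2 := by
    rw [norm_add_sq_real, real_inner_smul_left, real_inner_smul_right, hperp, norm_smul, norm_smul]
    simp [mul_pow]
  have hi1 : ⟪a • e1 + b • e2, e1⟫ = a * ‖e1‖ ^ 2 := by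
    simp only [inner_add_left, real_inner_smul_left, hperp', real_inner_self_eq_norm_sq]
    ring
  have hi2 : ⟪a • e1 + b • e2, e2⟫ = b * ‖e2‖ ^ 2 := by
    simp only [inner_add_left, real_inner_smul_left, hperp, real_inner_self_eq_norm_sq]
    ring
  rw [hnorm, hi1, hi2]
  field_simp


/-- Right triangle `ALB` with right angle at `L`, `H` the foot of the altitude from `L` onto
`AB`. A circle (center `I`, radius `r`) passes through `H` and meets line `AB` in a second
point `X` strictly between `A` and `B`, with `A`, `B` outside the circle. Writing
`t_A² = AI² - r²` and `t_B² = BI² - r²` for the powers of `A` and `B`, we have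
`t_A²/AL² + t_B²/BL² = 1`. Consequently, for any line `ℓ` through `L`, if the distance from
`A` to `ℓ` equals the tangent length `t_A`, then the distance from `B` to `ℓ` equals `t_B`. -/
theorem tangent_lengths_ratio_and_transfer
    (A B L H X I : EuclideanSpace ℝ (Fin 2)) (r : ℝ) (hr : 0 < r)
    (hAL : A ≠ L) (hBL : B ≠ L)
    (hright : ⟪A - L, B - L⟫ = 0)
    (hH_mem : H ∈ affineSpan ℝ ({A, B} : Set (EuclideanSpace ℝ (Fin 2))))
    (hH_perp : ⟪L - H, B - A⟫ = 0)
    (hH_on : dist H I = r) (hX_on : dist X I = r) (hHX : H ≠ X)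
    (hX_seg : X ∈ segment ℝ A B) (hXA : X ≠ A) (hXB : X ≠ B)
    (hA_out : r < dist A I) (hB_out : r < dist B I) :
    (dist A I ^ 2 - r ^ 2) / dist A L ^ 2 + (dist B I ^ 2 - r ^ 2) / dist B L ^ 2 = 1 ∧
    ∀ Q : EuclideanSpace ℝ (Fin 2), Q ≠ L →
      Metric.infDist A (affineSpan ℝ ({L, Q} : Set (EuclideanSpace ℝ (Fin 2))) : Set (EuclideanSpace ℝ (Fin 2))) ^ 2 = dist A I ^ 2 - r ^ 2 →
      Metric.infDist B (affineSpan ℝ ({L, Q} : Set (EuclideanSpace ℝ (Fin 2))) : Set (EuclideanSpace ℝ (Fin 2))) ^ 2 = dist B I ^ 2 - r ^ 2 := by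
  -- A ≠ B
  have hAB : A ≠ B := by
    rintro rfl
    rw [segment_same] at hX_seg
    exact hXA hX_seg
  set u : EuclideanSpace ℝ (Fin 2) := B - A with hu_def
  have hu : u ≠ 0 := sub_ne_zero.mpr (Ne.symm hAB)
  have hnu : ‖u‖ ≠ 0 := norm_ne_zero_iff.mpr hu
  set nn : ℝ := ‖u‖ ^ 2 with hnn_def
  have hnn : 0 < nn := by positivity
  -- H = A + h • u
  obtain ⟨h, hH⟩ : ∃ h : ℝ, H = A + h • u := by
    have hy : H -ᵥ A ∈ (affineSpan ℝ ({A, B} : Set (EuclideanSpace ℝ (Fin 2)))).direction :=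
      AffineSubspace.vsub_mem_direction hH_mem (left_mem_affineSpan_pair ℝ A B)
    rw [direction_affineSpan, vectorSpan_pair, Submodule.mem_span_singleton] at hy
    obtain ⟨t, ht⟩ := hy
    simp only [vsub_eq_sub] at ht
    refine ⟨-t, ?_⟩
    have : H - A = (-t) • u := by rw [neg_smul, ← ht, hu_def]; module
    linear_combination (norm := module) this
  -- X = A + x • u
  obtain ⟨x, hx01, hX⟩ : ∃ x : ℝ, x ∈ Set.Icc (0:ℝ) 1 ∧ X = A + x • u := by
    rw [segment_eq_image'] at hX_seg
    obtain ⟨t, ht1, ht2⟩ := hX_seg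
    exact ⟨t, ht1, ht2.symm⟩
  -- scalar abbreviations
  set w : EuclideanSpace ℝ (Fin 2) := A - I with hw_def
  set q : ℝ := ‖w‖ ^ 2 with hq_def
  set p : ℝ := ⟪w, u⟫ with hp_def
  -- circle equations
  have expand : ∀ t : ℝ, ‖w + t • u‖ ^ 2 = q + 2 * t * p + t ^ 2 * nn := by
    intro t
    rw [norm_add_sq_real, real_inner_smul_right, norm_smul]
    simp [mul_pow, hq_def, hp_def, hnn_def]
    ring
  have eH : q + 2 * h * p + h ^ 2 * nn = r ^ 2 := by
    have : ‖w + h • u‖ ^ 2 = r ^ 2 := by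
      rw [← hH_on, dist_eq_norm]
      congr 1
      rw [hH, hw_def]; abel_nf
    rw [expand h] at this; exact this
  have eX : q + 2 * x * p + x ^ 2 * nn = r ^ 2 := by
    have : ‖w + x • u‖ ^ 2 = r ^ 2 := by
      rw [← hX_on, dist_eq_norm]
      congr 1
      rw [hX, hw_def]; abel_nf
    rw [expand x] at this; exact this
  have hhx : h ≠ x := by
    intro hcon
    apply hHX
    rw [hH, hX, hcon]
  have hp2 : 2 * p + (h + x) * nn = 0 := by
    have hfac : (h - x) * (2 * p + (h + x) * nn) = 0 := by linear_combination eH - eX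
    rcases mul_eq_zero.mp hfac with h0 | h0
    · exact absurd (sub_eq_zero.mp h0) hhx
    · exact h0
  have tA2 : q - r ^ 2 = h * x * nn := by linear_combination eH - h * hp2
  have tB2 : ‖B - I‖ ^ 2 - r ^ 2 = (1 - h) * (1 - x) * nn := by
    have hBI : B - I = w + (1:ℝ) • u := by rw [hw_def, hu_def]; module
    rw [hBI, expand 1]
    linear_combination tA2 + hp2
  -- altitude foot relations
  set g : EuclideanSpace ℝ (Fin 2) := L - H with hg_def
  have hperpu : ⟪g, u⟫ = 0 := hH_perp
  have hperpu' : ⟪u, g⟫ = 0 := by rw [real_inner_comm]; exact hperpu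
  set d : ℝ := ‖g‖ ^ 2 with hd_def
  have hALv : A - L = (-h) • u - g := by rw [hg_def, hH, hu_def]; module
  have hBLv : B - L = (1 - h) • u - g := by rw [hg_def, hH, hu_def]; module
  have expand2 : ∀ t : ℝ, ‖t • u - g‖ ^ 2 = t ^ 2 * nn + d := by
    intro t
    rw [norm_sub_sq_real, real_inner_smul_left, hperpu', norm_smul]
    simp [mul_pow, hnn_def, hd_def]
  have hAL2 : ‖A - L‖ ^ 2 = h ^ 2 * nn + d := by rw [hALv, expand2 (-h)]; ring
  have hBL2 : ‖B - L‖ ^ 2 = (1 - h) ^ 2 * nn + d := by rw [hBLv, expand2 (1 - h)]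
  have hdval : d = h * (1 - h) * nn := by
    have hz : ⟪(-h) • u - g, (1 - h) • u - g⟫ = 0 := by
      rw [← hALv, ← hBLv]; exact hright
    simp only [inner_sub_left, inner_sub_right, real_inner_smul_left, real_inner_smul_right,
      hperpu, hperpu', real_inner_self_eq_norm_sq, mul_zero, zero_mul,
      sub_zero, zero_sub] at hz
    simp only [← hnn_def, ← hd_def] at hz
    linear_combination hz
  have hAL2' : ‖A - L‖ ^ 2 = h * nn := by rw [hAL2, hdval]; ring
  have hBL2' : ‖B - L‖ ^ 2 = (1 - h) * nn := by rw [hBL2, hdval]; ring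
  have hALpos : 0 < ‖A - L‖ ^ 2 :=
    pow_pos (norm_pos_iff.mpr (sub_ne_zero.mpr hAL)) 2
  have hBLpos : 0 < ‖B - L‖ ^ 2 :=
    pow_pos (norm_pos_iff.mpr (sub_ne_zero.mpr hBL)) 2
  have hhpos : 0 < h := by
    have h0 : 0 < h * nn := by rw [← hAL2']; exact hALpos
    rcases mul_pos_iff.mp h0 with ⟨h1, _⟩ | ⟨_, h2⟩
    · exact h1
    · linarith
  have h1pos : 0 < 1 - h := by
    have h0 : 0 < (1 - h) * nn := by rw [← hBL2']; exact hBLpos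
    rcases mul_pos_iff.mp h0 with ⟨h1, _⟩ | ⟨_, h2⟩
    · exact h1
    · linarith

  -- x ≠ 0 and x ≠ 1
  have hx0 : x ≠ 0 := by
    intro hcon
    apply hXA
    rw [hX, hcon]; simp
  have hx1 : x ≠ 1 := by
    intro hcon
    apply hXB
    rw [hX, hcon, hu_def]; simp
  have hhne : h ≠ 0 := ne_of_gt hhpos
  have h1ne : (1:ℝ) - h ≠ 0 := ne_of_gt h1pos
  have hnnne : nn ≠ 0 := ne_of_gt hnn
  -- restate in terms of dist
  have hAI : dist A I ^ 2 - r ^ 2 = h * x * nn := by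
    rw [dist_eq_norm, ← hw_def, ← hq_def]; exact tA2
  have hBI : dist B I ^ 2 - r ^ 2 = (1 - h) * (1 - x) * nn := by
    rw [dist_eq_norm]; exact tB2
  have hALd : dist A L ^ 2 = h * nn := by rw [dist_eq_norm]; exact hAL2'
  have hBLd : dist B L ^ 2 = (1 - h) * nn := by rw [dist_eq_norm]; exact hBL2'
  constructor
  · rw [hAI, hBI, hALd, hBLd]
    field_simp
    ring
  · intro Q hQ hA2cond
    have hvne : Q - L ≠ 0 := sub_ne_zero.mpr hQ
    have hnv : 0 < ‖Q - L‖ ^ 2 := pow_pos (norm_pos_iff.mpr hvne) 2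
    have hnvne : ‖Q - L‖ ^ 2 ≠ 0 := ne_of_gt hnv
    set nv : ℝ := ‖Q - L‖ ^ 2 with hnv_def
    set α : ℝ := ⟪A - L, Q - L⟫ with hα_def
    set β : ℝ := ⟪B - L, Q - L⟫ with hβ_def
    have hiA := infDist_line_sq A L Q hQ
    have hiB := infDist_line_sq B L Q hQ
    have hid := inner_sq_div_add (Q - L) (A - L) (B - L)
      (sub_ne_zero.mpr hAL) (sub_ne_zero.mpr hBL) hright
    rw [real_inner_comm (A - L) (Q - L), real_inner_comm (B - L) (Q - L)] at hid
    rw [← hα_def, ← hβ_def, hAL2', hBL2', ← hnv_def] at hid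
    rw [hiA, ← hα_def, ← hnv_def, hAL2', hAI] at hA2cond
    rw [hiB, ← hβ_def, ← hnv_def, hBL2', hBI]
    -- now pure algebra
    have eA : α ^ 2 = h * nn * nv - h * x * nn * nv := by
      have h1 : α ^ 2 / nv = h * nn - h * x * nn := by linarith
      have h2 : α ^ 2 = (h * nn - h * x * nn) * nv := (div_eq_iff hnvne).mp h1
      linear_combination h2
    have h1nn : (1 - h) * nn ≠ 0 := mul_ne_zero h1ne hnnne
    have eB : β ^ 2 = x * (1 - h) * nn * nv := by
      have h2 : β ^ 2 / ((1 - h) * nn) = nv - α ^ 2 / (h * nn) := by linarith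
      have h3 : β ^ 2 = (nv - α ^ 2 / (h * nn)) * ((1 - h) * nn) :=
        (div_eq_iff h1nn).mp h2
      rw [h3, eA]
      field_simp
      ring
    have h4 : β ^ 2 / nv = x * ((1 - h) * nn) := by
      rw [eB]; field_simp
    linear_combination -h4
end
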